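/- For the fidelity between a single-qubit state ρ with Bloch vector a⃗ and its (normalized) post-measurement state ρ_± = M_± ρ M_±/Tr(M_± ρ M_±), one has F(ρ, ρ_±) = 1 − [1−(a⃗·n̂)²][1−√(1−ε²)] / [2(1 ± ε a⃗·n̂)]. In particular F = 1 whenever a⃗·n̂ = ±1 (any ε), and for a⃗ = 0 the fidelity equals (1+√(1−ε²))/2, which is strictly decreasing in ε on [0,1]. -/
import Mathlib


open Matrix Complex

noncomputable section

/-- The Pauli matrices σ_x, σ_y, σ_z. -/
def pauli : Fin 3 → Matrix (Fin 2) (Fin 2) ℂ :=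
  ![!![0, 1; 1, 0], !![0, -Complex.I; Complex.I, 0], !![1, 0; 0, -1]]

/-- n̂ · σ⃗ for a real vector n̂. -/
def dotSigma (n : Fin 3 → ℝ) : Matrix (Fin 2) (Fin 2) ℂ := ∑ i, (n i : ℂ) • pauli i

/-- ε₊ = √((1+ε)/2) + √((1−ε)/2). -/
def epsPlus (ε : ℝ) : ℝ := Real.sqrt ((1 + ε) / 2) + Real.sqrt ((1 - ε) / 2)

/-- ε₋ = √((1+ε)/2) − √((1−ε)/2). -/
def epsMinus (ε : ℝ) : ℝ := Real.sqrt ((1 + ε) / 2) - Real.sqrt ((1 - ε) / 2)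

/-- M₊(ε,n̂) = (1/2)(ε₊ I + ε₋ n̂·σ). -/
def Mplus (ε : ℝ) (n : Fin 3 → ℝ) : Matrix (Fin 2) (Fin 2) ℂ :=
  (1 / 2 : ℂ) • ((epsPlus ε : ℂ) • (1 : Matrix (Fin 2) (Fin 2) ℂ) + (epsMinus ε : ℂ) • dotSigma n)

/-- M₋(ε,n̂) = (1/2)(ε₊ I − ε₋ n̂·σ). -/
def Mminus (ε : ℝ) (n : Fin 3 → ℝ) : Matrix (Fin 2) (Fin 2) ℂ :=
  (1 / 2 : ℂ) • ((epsPlus ε : ℂ) • (1 : Matrix (Fin 2) (Fin 2) ℂ) - (epsMinus ε : ℂ) • dotSigma n)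

/-- Single-qubit state with Bloch vector a⃗. -/
def rhoBloch (a : Fin 3 → ℝ) : Matrix (Fin 2) (Fin 2) ℂ :=
  (1 / 2 : ℂ) • (1 + dotSigma a)

/-- Single-qubit fidelity F(ρ,σ) = Tr(ρσ) + 2√(det ρ · det σ). -/
def fid (ρ σ : Matrix (Fin 2) (Fin 2) ℂ) : ℝ :=
  ((ρ * σ).trace).re + 2 * Real.sqrt (ρ.det.re * σ.det.re)

/-- The normalized post-measurement state M ρ M / Tr(M ρ M). -/
def postState (M ρ : Matrix (Fin 2) (Fin 2) ℂ) : Matrix (Fin 2) (Fin 2) ℂ :=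
  ((M * ρ * M).trace)⁻¹ • (M * ρ * M)

lemma Mplus_eq (ε : ℝ) (n : Fin 3 → ℝ) :
    Mplus ε n = !![(((epsPlus ε + epsMinus ε * n 2) / 2 : ℝ) : ℂ),
        ((epsMinus ε * n 0 / 2 : ℝ) : ℂ) - ((epsMinus ε * n 1 / 2 : ℝ) : ℂ) * Complex.I;
      ((epsMinus ε * n 0 / 2 : ℝ) : ℂ) + ((epsMinus ε * n 1 / 2 : ℝ) : ℂ) * Complex.I,
      (((epsPlus ε - epsMinus ε * n 2) / 2 : ℝ) : ℂ)] := by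
  ext i j
  fin_cases i <;> fin_cases j <;>
    simp [Mplus, dotSigma, pauli, Fin.sum_univ_three, Matrix.one_apply] <;> ring

lemma rho_eq (a : Fin 3 → ℝ) :
    rhoBloch a = !![(((1 + a 2) / 2 : ℝ) : ℂ),
        ((a 0 / 2 : ℝ) : ℂ) - ((a 1 / 2 : ℝ) : ℂ) * Complex.I;
      ((a 0 / 2 : ℝ) : ℂ) + ((a 1 / 2 : ℝ) : ℂ) * Complex.I,
      (((1 - a 2) / 2 : ℝ) : ℂ)] := by
  ext i j
  fin_cases i <;> fin_cases j <;>
    simp [rhoBloch, dotSigma, pauli, Fin.sum_univ_three, Matrix.one_apply] <;> ring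

lemma trace_MrM (ε : ℝ) (n a : Fin 3 → ℝ) (hn : n 0 ^ 2 + n 1 ^ 2 + n 2 ^ 2 = 1)
    (hpm : epsPlus ε * epsMinus ε = ε)
    (hsq : epsPlus ε ^ 2 + epsMinus ε ^ 2 = 2) :
    (Mplus ε n * rhoBloch a * Mplus ε n).trace
      = (((1 + ε * (a ⬝ᵥ n)) / 2 : ℝ) : ℂ) := by
  rw [Mplus_eq, rho_eq]
  simp only [Matrix.mul_fin_two, Matrix.trace_fin_two_of, dotProduct,
    Fin.sum_univ_three, smul_eq_mul]
  rw [Complex.ext_iff]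
  simp only [Complex.add_re, Complex.add_im, Complex.mul_re, Complex.mul_im,
    Complex.sub_re, Complex.sub_im, Complex.ofReal_re, Complex.ofReal_im,
    Complex.I_re, Complex.I_im]
  constructor
  · linear_combination ((epsMinus ε ^ 2) / 4) * hn + (1 / 4) * hsq +
      ((a 0 * n 0 + a 1 * n 1 + a 2 * n 2) / 2) * hpm
  · ring

lemma trace_rMrM (ε : ℝ) (n a : Fin 3 → ℝ) (hn : n 0 ^ 2 + n 1 ^ 2 + n 2 ^ 2 = 1)
    (hpm : epsPlus ε * epsMinus ε = ε)
    (hp2 : epsPlus ε ^ 2 = 1 + Real.sqrt (1 - ε ^ 2))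
    (hm2 : epsMinus ε ^ 2 = 1 - Real.sqrt (1 - ε ^ 2)) :
    (rhoBloch a * (Mplus ε n * rhoBloch a * Mplus ε n)).trace
      = (((1 + 2 * ε * (a ⬝ᵥ n) + (1 - Real.sqrt (1 - ε ^ 2)) * (a ⬝ᵥ n) ^ 2
          + Real.sqrt (1 - ε ^ 2) * (a ⬝ᵥ a)) / 4 : ℝ) : ℂ) := by
  rw [Mplus_eq, rho_eq]
  simp only [Matrix.mul_fin_two, Matrix.trace_fin_two_of, dotProduct,
    Fin.sum_univ_three, smul_eq_mul]
  rw [Complex.ext_iff]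
  simp only [Complex.add_re, Complex.add_im, Complex.mul_re, Complex.mul_im,
    Complex.sub_re, Complex.sub_im, Complex.ofReal_re, Complex.ofReal_im,
    Complex.I_re, Complex.I_im]
  constructor
  · linear_combination
      ((epsMinus ε ^ 2 * (1 - (a 0 * a 0 + a 1 * a 1 + a 2 * a 2))) / 8) * hn +
      ((1 + (a 0 * a 0 + a 1 * a 1 + a 2 * a 2)) / 8) * hp2 +
      ((1 - (a 0 * a 0 + a 1 * a 1 + a 2 * a 2)) / 8
        + (a 0 * n 0 + a 1 * n 1 + a 2 * n 2) ^ 2 / 4) * hm2 +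
      ((a 0 * n 0 + a 1 * n 1 + a 2 * n 2) / 2) * hpm
  · ring

lemma det_rho (a : Fin 3 → ℝ) :
    (rhoBloch a).det = (((1 - a ⬝ᵥ a) / 4 : ℝ) : ℂ) := by
  rw [rho_eq]
  simp only [Matrix.det_fin_two_of, dotProduct, Fin.sum_univ_three]
  rw [Complex.ext_iff]
  simp only [Complex.add_re, Complex.add_im, Complex.mul_re, Complex.mul_im,
    Complex.sub_re, Complex.sub_im, Complex.ofReal_re, Complex.ofReal_im,
    Complex.I_re, Complex.I_im]
  constructor <;> ring

lemma det_Mplus (ε : ℝ) (n : Fin 3 → ℝ) (hn : n 0 ^ 2 + n 1 ^ 2 + n 2 ^ 2 = 1)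
    (hp2 : epsPlus ε ^ 2 = 1 + Real.sqrt (1 - ε ^ 2))
    (hm2 : epsMinus ε ^ 2 = 1 - Real.sqrt (1 - ε ^ 2)) :
    (Mplus ε n).det = ((Real.sqrt (1 - ε ^ 2) / 2 : ℝ) : ℂ) := by
  rw [Mplus_eq]
  simp only [Matrix.det_fin_two_of]
  rw [Complex.ext_iff]
  simp only [Complex.add_re, Complex.add_im, Complex.mul_re, Complex.mul_im,
    Complex.sub_re, Complex.sub_im, Complex.ofReal_re, Complex.ofReal_im,
    Complex.I_re, Complex.I_im]
  constructor
  · linear_combination (-(epsMinus ε ^ 2) / 4) * hn + (1 / 4) * hp2 - (1 / 4) * hm2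
  · ring

lemma eps_facts (ε : ℝ) (hε0 : 0 ≤ ε) (hε1 : ε ≤ 1) :
    epsPlus ε * epsMinus ε = ε ∧
    epsPlus ε ^ 2 = 1 + Real.sqrt (1 - ε ^ 2) ∧
    epsMinus ε ^ 2 = 1 - Real.sqrt (1 - ε ^ 2) := by
  have h1 : (0:ℝ) ≤ (1 + ε) / 2 := by linarith
  have h2 : (0:ℝ) ≤ (1 - ε) / 2 := by linarith
  have hu : Real.sqrt ((1 + ε) / 2) ^ 2 = (1 + ε) / 2 := Real.sq_sqrt h1
  have hv : Real.sqrt ((1 - ε) / 2) ^ 2 = (1 - ε) / 2 := Real.sq_sqrt h2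
  have huv : Real.sqrt ((1 + ε) / 2) * Real.sqrt ((1 - ε) / 2)
      = Real.sqrt (1 - ε ^ 2) / 2 := by
    rw [← Real.sqrt_mul h1]
    have : (1 + ε) / 2 * ((1 - ε) / 2) = (1 - ε ^ 2) / 4 := by ring
    rw [this, show (1 - ε ^ 2) / 4 = (1 - ε ^ 2) * (1 / 2) ^ 2 by ring,
      Real.sqrt_mul (by nlinarith : (0:ℝ) ≤ 1 - ε ^ 2), Real.sqrt_sq (by norm_num : (0:ℝ) ≤ 1/2)]
    ring
  refine ⟨?_, ?_, ?_⟩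
  · unfold epsPlus epsMinus
    nlinarith [hu, hv, huv]
  · unfold epsPlus
    nlinarith [hu, hv, huv]
  · unfold epsMinus
    nlinarith [hu, hv, huv]


lemma fid_plus (ε : ℝ) (n a : Fin 3 → ℝ)
    (hε0 : 0 ≤ ε) (hε1 : ε ≤ 1) (hn : n 0 ^ 2 + n 1 ^ 2 + n 2 ^ 2 = 1)
    (ha : a ⬝ᵥ a ≤ 1) (hd : 0 < 1 + ε * (a ⬝ᵥ n)) :
    fid (rhoBloch a) (postState (Mplus ε n) (rhoBloch a))
      = 1 - (1 - (a ⬝ᵥ n) ^ 2) * (1 - Real.sqrt (1 - ε ^ 2)) / (2 * (1 + ε * (a ⬝ᵥ n))) := by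
  obtain ⟨hpm, hp2, hm2⟩ := eps_facts ε hε0 hε1
  have hsq : epsPlus ε ^ 2 + epsMinus ε ^ 2 = 2 := by rw [hp2, hm2]; ring
  set q := Real.sqrt (1 - ε ^ 2) with hqdef
  have hq0 : 0 ≤ q := Real.sqrt_nonneg _
  set s := a ⬝ᵥ n with hsdef
  set A := a ⬝ᵥ a with hAdef
  have ht := trace_MrM ε n a hn hpm hsq
  have ht2 := trace_rMrM ε n a hn hpm hp2 hm2
  have hdr := det_rho a
  have hdM := det_Mplus ε n hn hp2 hm2
  set c : ℝ := (1 + ε * s) / 2 with hc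
  have hc0 : 0 < c := by rw [hc]; linarith
  have hNdet : (Mplus ε n * rhoBloch a * Mplus ε n).det
      = ((q ^ 2 * (1 - A) / 16 : ℝ) : ℂ) := by
    rw [Matrix.det_mul, Matrix.det_mul, hdM, hdr]
    push_cast; ring
  have hT2 : ((rhoBloch a * postState (Mplus ε n) (rhoBloch a)).trace).re
      = c⁻¹ * ((1 + 2 * ε * s + (1 - q) * s ^ 2 + q * A) / 4) := by
    rw [postState, Matrix.mul_smul, Matrix.trace_smul, ht, ht2, smul_eq_mul,
      ← Complex.ofReal_inv, ← Complex.ofReal_mul, Complex.ofReal_re]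
  have hD2 : ((postState (Mplus ε n) (rhoBloch a)).det).re
      = (c⁻¹) ^ 2 * (q ^ 2 * (1 - A) / 16) := by
    rw [postState, Matrix.det_smul, hNdet, ht]
    simp only [Fintype.card_fin]
    rw [← Complex.ofReal_inv, ← Complex.ofReal_pow, ← Complex.ofReal_mul, Complex.ofReal_re]
  have hA1 : A ≤ 1 := ha
  unfold fid
  rw [hT2, hD2, hdr, Complex.ofReal_re]
  have hsqrt : Real.sqrt ((1 - A) / 4 * ((c⁻¹) ^ 2 * (q ^ 2 * (1 - A) / 16)))
      = (1 - A) * q / (8 * c) := by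
    rw [show (1 - A) / 4 * ((c⁻¹) ^ 2 * (q ^ 2 * (1 - A) / 16))
        = ((1 - A) * q / (8 * c)) ^ 2 by field_simp; ring]
    exact Real.sqrt_sq (div_nonneg (mul_nonneg (by linarith) hq0) (by linarith))
  rw [hsqrt]
  have h2c : 1 + ε * s = 2 * c := by rw [hc]; ring
  rw [h2c]
  field_simp
  ring

lemma Mminus_eq (ε : ℝ) (n : Fin 3 → ℝ) : Mminus ε n = Mplus ε (-n) := by
  ext i j
  fin_cases i <;> fin_cases j <;>
    simp [Mminus, Mplus, dotSigma, pauli, Fin.sum_univ_three, Matrix.one_apply,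
      Pi.neg_apply] <;> ring

/-- F(ρ,ρ_±) = 1 − [1−(a⃗·n̂)²][1−√(1−ε²)]/[2(1 ± ε a⃗·n̂)];
in particular F = 1 when a⃗·n̂ = ±1, for a⃗ = 0 the fidelity is (1+√(1−ε²))/2,
which is strictly decreasing in ε on [0,1]. -/
theorem fidelity_post_measurement (ε : ℝ) (n a : Fin 3 → ℝ)
    (hε0 : 0 ≤ ε) (hε1 : ε ≤ 1) (hn : n 0 ^ 2 + n 1 ^ 2 + n 2 ^ 2 = 1)
    (ha : a ⬝ᵥ a ≤ 1)
    (hdp : 0 < 1 + ε * (a ⬝ᵥ n)) (hdm : 0 < 1 - ε * (a ⬝ᵥ n)) :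
    (fid (rhoBloch a) (postState (Mplus ε n) (rhoBloch a))
      = 1 - (1 - (a ⬝ᵥ n) ^ 2) * (1 - Real.sqrt (1 - ε ^ 2)) / (2 * (1 + ε * (a ⬝ᵥ n)))) ∧
    (fid (rhoBloch a) (postState (Mminus ε n) (rhoBloch a))
      = 1 - (1 - (a ⬝ᵥ n) ^ 2) * (1 - Real.sqrt (1 - ε ^ 2)) / (2 * (1 - ε * (a ⬝ᵥ n)))) ∧
    ((a ⬝ᵥ n = 1 ∨ a ⬝ᵥ n = -1) →
      fid (rhoBloch a) (postState (Mplus ε n) (rhoBloch a)) = 1 ∧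
      fid (rhoBloch a) (postState (Mminus ε n) (rhoBloch a)) = 1) ∧
    (a = 0 →
      fid (rhoBloch a) (postState (Mplus ε n) (rhoBloch a))
        = (1 + Real.sqrt (1 - ε ^ 2)) / 2) ∧
    StrictAntiOn (fun e : ℝ => (1 + Real.sqrt (1 - e ^ 2)) / 2) (Set.Icc 0 1) := by
  have h1 := fid_plus ε n a hε0 hε1 hn ha hdp
  have hn' : (-n) 0 ^ 2 + (-n) 1 ^ 2 + (-n) 2 ^ 2 = 1 := by
    simpa using hn
  have hsn : a ⬝ᵥ (-n) = -(a ⬝ᵥ n) := dotProduct_neg a n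
  have hd' : 0 < 1 + ε * (a ⬝ᵥ (-n)) := by rw [hsn]; linarith
  have h2 := fid_plus ε (-n) a hε0 hε1 hn' ha hd'
  rw [hsn] at h2
  have h2' : fid (rhoBloch a) (postState (Mminus ε n) (rhoBloch a))
      = 1 - (1 - (a ⬝ᵥ n) ^ 2) * (1 - Real.sqrt (1 - ε ^ 2)) / (2 * (1 - ε * (a ⬝ᵥ n))) := by
    rw [Mminus_eq, h2]; ring_nf
  refine ⟨h1, h2', ?_, ?_, ?_⟩
  · rintro (h | h) <;> rw [h1, h2', h] <;> norm_num
  · intro h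
    subst h
    rw [h1, zero_dotProduct]
    ring
  · intro x hx y hy hxy
    simp only
    have hy1 : (0:ℝ) ≤ 1 - y ^ 2 := by nlinarith [hy.1, hy.2]
    have hlt : 1 - y ^ 2 < 1 - x ^ 2 := by nlinarith [hx.1]
    have := Real.sqrt_lt_sqrt hy1 hlt
    linarith
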